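/- Fix points z : Fin n → EuclideanSpace ℝ (Fin d), let C : Matrix (Fin n) (Fin n) ℝ be given by C i j = ‖z i − z j‖², let p₀ : Fin n → ℝ be a probability vector, and let λ ≥ 0. Define d_{W₂}(p, q) = min over Π ∈ M(p, q) of trace(Cᵀ * Π) for probability vectors p, q on Fin n. Then the infimum over all probability vectors p₁ : Fin n → ℝ of d_{W₂}(p₀, p₁) + λ · card(p₁) equals the infimum over Π ∈ S(p₀) of trace(Cᵀ * Π) + λ · card(Πᵀ𝟙). -/
import Mathlib


open Matrix

/-- The set of couplings `M(p, q)`: entrywise-nonnegative matrices with row sums `p`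
and column sums `q`. -/
def couplings {n : ℕ} (p q : Fin n → ℝ) : Set (Matrix (Fin n) (Fin n) ℝ) :=
  {P | (∀ j i, 0 ≤ P j i) ∧ (∀ j, ∑ i, P j i = p j) ∧ (∀ i, ∑ j, P j i = q i)}

/-- The feasible set `S(p₀)`: entrywise-nonnegative matrices with row sums `p₀`. -/
def feasibleSet {n : ℕ} (p₀ : Fin n → ℝ) : Set (Matrix (Fin n) (Fin n) ℝ) :=
  {P | (∀ j i, 0 ≤ P j i) ∧ ∀ j, ∑ i, P j i = p₀ j}

theorem stmt_14 (d n : ℕ) (z : Fin n → EuclideanSpace ℝ (Fin d))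
    (C : Matrix (Fin n) (Fin n) ℝ) (hC : ∀ i j, C i j = ‖z i - z j‖ ^ 2)
    (p₀ : Fin n → ℝ) (hp₀ : ∀ j, 0 ≤ p₀ j) (hsum : ∑ j, p₀ j = 1)
    (lam : ℝ) (hlam : 0 ≤ lam)
    (dW : (Fin n → ℝ) → (Fin n → ℝ) → ℝ)
    (hdW : ∀ p q, dW p q = sInf {v : ℝ | ∃ P ∈ couplings p q, v = Matrix.trace (Cᵀ * P)}) :
    sInf {v : ℝ | ∃ p₁ : Fin n → ℝ, (∀ i, 0 ≤ p₁ i) ∧ (∑ i, p₁ i = 1) ∧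
        v = dW p₀ p₁ + lam * ((Finset.univ.filter (fun i : Fin n => p₁ i ≠ 0)).card : ℝ)}
      = sInf {v : ℝ | ∃ P ∈ feasibleSet p₀,
          v = Matrix.trace (Cᵀ * P) +
            lam * ((Finset.univ.filter (fun i : Fin n => ∑ j, P j i ≠ 0)).card : ℝ)} := by
  have hCnn : ∀ i j, 0 ≤ C i j := fun i j => by rw [hC]; positivity
  -- trace is nonnegative on nonneg matrices
  have htr : ∀ P : Matrix (Fin n) (Fin n) ℝ, (∀ j i, 0 ≤ P j i) →
      0 ≤ Matrix.trace (Cᵀ * P) := by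
    intro P hP
    rw [Matrix.trace]
    refine Finset.sum_nonneg fun i _ => ?_
    rw [Matrix.diag_apply, Matrix.mul_apply]
    exact Finset.sum_nonneg fun j _ => mul_nonneg (hCnn j i) (hP j i)
  -- product coupling
  have hcoup : ∀ p₁ : Fin n → ℝ, (∀ i, 0 ≤ p₁ i) → (∑ i, p₁ i = 1) →
      (Matrix.of fun j i => p₀ j * p₁ i) ∈ couplings p₀ p₁ := by
    intro p₁ h1 h2
    refine ⟨fun j i => mul_nonneg (hp₀ j) (h1 i), fun j => ?_, fun i => ?_⟩
    · simp [← Finset.mul_sum, h2]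
    · simp [← Finset.sum_mul, hsum]
  -- the coupling trace set
  set T : (Fin n → ℝ) → Set ℝ :=
    fun p₁ => {v : ℝ | ∃ P ∈ couplings p₀ p₁, v = Matrix.trace (Cᵀ * P)} with hT
  have hTne : ∀ p₁ : Fin n → ℝ, (∀ i, 0 ≤ p₁ i) → (∑ i, p₁ i = 1) → (T p₁).Nonempty := by
    intro p₁ h1 h2
    exact ⟨_, _, hcoup p₁ h1 h2, rfl⟩
  have hTbdd : ∀ p₁ : Fin n → ℝ, BddBelow (T p₁) := by
    intro p₁
    exact ⟨0, fun v hv => by obtain ⟨P, hP, rfl⟩ := hv; exact htr P hP.1⟩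
  have hdWnn : ∀ p₁ : Fin n → ℝ, 0 ≤ dW p₀ p₁ := by
    intro p₁
    rw [hdW]
    exact Real.sInf_nonneg (fun v hv => by obtain ⟨P, hP, rfl⟩ := hv; exact htr P hP.1)
  set L : Set ℝ := {v : ℝ | ∃ p₁ : Fin n → ℝ, (∀ i, 0 ≤ p₁ i) ∧ (∑ i, p₁ i = 1) ∧
        v = dW p₀ p₁ + lam * ((Finset.univ.filter (fun i : Fin n => p₁ i ≠ 0)).card : ℝ)}
    with hLdef
  set R : Set ℝ := {v : ℝ | ∃ P ∈ feasibleSet p₀,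
          v = Matrix.trace (Cᵀ * P) +
            lam * ((Finset.univ.filter (fun i : Fin n => ∑ j, P j i ≠ 0)).card : ℝ)}
    with hRdef
  have hLbdd : BddBelow L := by
    refine ⟨0, fun v hv => ?_⟩
    obtain ⟨p₁, h1, h2, rfl⟩ := hv
    have := hdWnn p₁
    positivity
  have hRbdd : BddBelow R := by
    refine ⟨0, fun v hv => ?_⟩
    obtain ⟨P, hP, rfl⟩ := hv
    have := htr P hP.1
    positivity
  have hLne : L.Nonempty := by
    refine ⟨_, p₀, hp₀, hsum, rfl⟩
  have hRne : R.Nonempty := by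
    obtain ⟨h1, h2, h3⟩ := hcoup p₀ hp₀ hsum
    exact ⟨_, _, ⟨h1, h2⟩, rfl⟩
  apply le_antisymm
  · -- sInf L ≤ sInf R
    refine le_csInf hRne ?_
    rintro v ⟨P, ⟨hPnn, hProw⟩, rfl⟩
    set p₁ : Fin n → ℝ := fun i => ∑ j, P j i with hp₁
    have h1 : ∀ i, 0 ≤ p₁ i := fun i => Finset.sum_nonneg fun j _ => hPnn j i
    have h2 : ∑ i, p₁ i = 1 := by
      rw [hp₁]
      rw [Finset.sum_comm]
      simp only [hProw, hsum]
    have hmem : (dW p₀ p₁ +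
        lam * ((Finset.univ.filter (fun i : Fin n => p₁ i ≠ 0)).card : ℝ)) ∈ L :=
      ⟨p₁, h1, h2, rfl⟩
    refine le_trans (csInf_le hLbdd hmem) ?_
    have hdle : dW p₀ p₁ ≤ Matrix.trace (Cᵀ * P) := by
      rw [hdW]
      exact csInf_le (hTbdd p₁) ⟨P, ⟨hPnn, hProw, fun i => rfl⟩, rfl⟩
    have : (Finset.univ.filter (fun i : Fin n => p₁ i ≠ 0))
        = (Finset.univ.filter (fun i : Fin n => ∑ j, P j i ≠ 0)) := rfl
    rw [this]
    linarith
  · -- sInf R ≤ sInf L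
    refine le_csInf hLne ?_
    rintro v ⟨p₁, h1, h2, rfl⟩
    have key : sInf R - lam * ((Finset.univ.filter (fun i : Fin n => p₁ i ≠ 0)).card : ℝ)
        ≤ dW p₀ p₁ := by
      rw [hdW]
      refine le_csInf (hTne p₁ h1 h2) ?_
      rintro w ⟨P, ⟨hPnn, hProw, hPcol⟩, rfl⟩
      have hmem : (Matrix.trace (Cᵀ * P) +
          lam * ((Finset.univ.filter (fun i : Fin n => ∑ j, P j i ≠ 0)).card : ℝ)) ∈ R :=
        ⟨P, ⟨hPnn, hProw⟩, rfl⟩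
      have hcard : (Finset.univ.filter (fun i : Fin n => ∑ j, P j i ≠ 0))
          = (Finset.univ.filter (fun i : Fin n => p₁ i ≠ 0)) := by
        apply Finset.filter_congr
        intro i _
        rw [hPcol i]
      have := csInf_le hRbdd hmem
      rw [hcard] at this
      linarith
    linarith
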